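/- Let n ≥ 3 be an integer, β = 2π/n, and let A_j = exp(iβj) ∈ ℂ (j ∈ ℤ, indices modulo n) be the vertices of the regular n-gon inscribed in the unit circle. Let k be an integer with 1 ≤ k < n/2 and define φ_k : ℂ → ℂ by φ_k(z) = (cos(kβ/2)/cos(β/2))·exp(i(k−1)β/2)·z. Then for every integer j the point φ_k(A_j) lies on the line through A_{j−1} and A_{j−1+k} and also on the line through A_j and A_{j+k}; that is, φ_k maps each vertex A_j of the polygon to the intersection point T_j of the two consecutive k-th diagonals A_{j−1}A_{j−1+k} and A_jA_{j+k}. -/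

import Mathlib

open Real

lemma aux_line (a b : ℝ) (ha : Real.cos a ≠ 0) (hb : Real.sin b ≠ 0) :
    ∃ t : ℝ, ((Real.cos b / Real.cos a : ℝ) : ℂ) * Complex.exp (((b - a : ℝ) : ℂ) * Complex.I)
      = 1 + (t : ℂ) * (Complex.exp (((2 * b : ℝ) : ℂ) * Complex.I) - 1) := by
  refine ⟨(1 - Real.cos b * Real.sin a / (Real.sin b * Real.cos a)) / 2, ?_⟩
  have hpb := Real.sin_sq_add_cos_sq b
  have hre : Real.cos b / Real.cos a * Real.cos (b - a)
      = 1 + (1 - Real.cos b * Real.sin a / (Real.sin b * Real.cos a)) / 2 * (Real.cos (2*b) - 1) := by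
    rw [Real.cos_sub, Real.cos_two_mul]
    field_simp
    linear_combination (2 * Real.cos b * Real.sin a) * hpb
  have him : Real.cos b / Real.cos a * Real.sin (b - a)
      = (1 - Real.cos b * Real.sin a / (Real.sin b * Real.cos a)) / 2 * Real.sin (2*b) := by
    rw [Real.sin_sub, Real.sin_two_mul]
    field_simp
  apply Complex.ext <;>
    simp only [Complex.mul_re, Complex.mul_im, Complex.add_re, Complex.add_im, Complex.sub_re,
      Complex.sub_im, Complex.one_re, Complex.one_im, Complex.ofReal_re, Complex.ofReal_im,
      Complex.exp_ofReal_mul_I_re, Complex.exp_ofReal_mul_I_im]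
  · linarith [hre]
  · linarith [him]

/-- For a regular `n`-gon with vertices `A j = exp(iβj)`, `β = 2π/n`,
and `1 ≤ k < n/2`, the rotational similarity
`φ_k(z) = (cos(kβ/2)/cos(β/2))·exp(i(k−1)β/2)·z` maps each vertex `A j` to a point
lying on the line through `A (j−1)` and `A (j−1+k)` and on the line through
`A j` and `A (j+k)`, i.e. to the intersection of two consecutive `k`-th diagonals. -/
theorem stmt_0 (n : ℤ) (hn : 3 ≤ n) (β : ℝ) (hβ : β = 2 * π / n)
    (A : ℤ → ℂ) (hA : ∀ j : ℤ, A j = Complex.exp ((β * j : ℝ) * Complex.I))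
    (k : ℤ) (hk1 : 1 ≤ k) (hk2 : (k : ℝ) < n / 2)
    (φ : ℂ → ℂ)
    (hφ : ∀ z : ℂ, φ z = (Real.cos (k * β / 2) / Real.cos (β / 2) : ℝ) *
      Complex.exp (((k - 1) * β / 2 : ℝ) * Complex.I) * z) :
    ∀ j : ℤ,
      (∃ t : ℝ, φ (A j) = A (j - 1) + t • (A (j - 1 + k) - A (j - 1))) ∧
      (∃ t : ℝ, φ (A j) = A j + t • (A (j + k) - A j)) := by
  have hn3 : (3 : ℝ) ≤ (n : ℝ) := by exact_mod_cast hn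
  have hnpos : (0 : ℝ) < n := by linarith
  have hk1' : (1 : ℝ) ≤ (k : ℝ) := by exact_mod_cast hk1
  have hβpos : 0 < β := by
    rw [hβ]; positivity
  have hk2' : (k : ℝ) * 2 < (n : ℝ) := by
    rw [lt_div_iff₀ (by norm_num : (0:ℝ) < 2)] at hk2; exact hk2
  have ha2 : β / 2 < π / 2 := by
    have h : β < π := by
      rw [hβ, div_lt_iff₀ hnpos]; nlinarith [pi_pos]
    linarith
  have ha : Real.cos (β / 2) ≠ 0 := by
    have : 0 < Real.cos (β / 2) := by
      apply Real.cos_pos_of_mem_Ioo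
      constructor <;> [linarith [pi_pos]; linarith]
    linarith
  have hblt : (k : ℝ) * β / 2 < π / 2 := by
    have h : (k : ℝ) * β < π := by
      rw [hβ, ← mul_div_assoc, div_lt_iff₀ hnpos]
      nlinarith [pi_pos]
    linarith
  have hb : Real.sin ((k : ℝ) * β / 2) ≠ 0 := by
    have : 0 < Real.sin ((k : ℝ) * β / 2) := by
      apply Real.sin_pos_of_pos_of_lt_pi
      · nlinarith
      · linarith [pi_pos]
    linarith
  intro j
  constructor
  · -- line through A (j-1) and A (j-1+k)
    have ha' : Real.cos (-(β / 2)) ≠ 0 := by rwa [Real.cos_neg]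
    obtain ⟨t, ht⟩ := aux_line (-(β / 2)) ((k : ℝ) * β / 2) ha' hb
    rw [Real.cos_neg] at ht
    refine ⟨t, ?_⟩
    rw [hφ, hA, hA, hA]
    have f1 : Complex.exp ((((k : ℝ) * β / 2 - -(β / 2) : ℝ) : ℂ) * Complex.I)
        * Complex.exp ((β * ((j - 1 : ℤ) : ℝ) : ℝ) * Complex.I)
        = Complex.exp ((((k : ℝ) - 1) * β / 2 : ℝ) * Complex.I)
        * Complex.exp ((β * (j : ℝ) : ℝ) * Complex.I) := by
      rw [← Complex.exp_add, ← Complex.exp_add]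
      congr 1
      push_cast
      ring
    have f2 : Complex.exp (((2 * ((k : ℝ) * β / 2) : ℝ) : ℂ) * Complex.I)
        * Complex.exp ((β * ((j - 1 : ℤ) : ℝ) : ℝ) * Complex.I)
        = Complex.exp ((β * ((j - 1 + k : ℤ) : ℝ) : ℝ) * Complex.I) := by
      rw [← Complex.exp_add]
      congr 1
      push_cast
      ring
    rw [Complex.real_smul]
    linear_combination Complex.exp ((β * ((j - 1 : ℤ) : ℝ) : ℝ) * Complex.I) * ht
      - (((Real.cos ((k : ℝ) * β / 2) / Real.cos (β / 2) : ℝ)) : ℂ) * f1 + (t : ℂ) * f2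
  · obtain ⟨t, ht⟩ := aux_line (β / 2) ((k : ℝ) * β / 2) ha hb
    refine ⟨t, ?_⟩
    rw [hφ, hA, hA]
    have f1 : Complex.exp ((((k : ℝ) * β / 2 - β / 2 : ℝ) : ℂ) * Complex.I)
        = Complex.exp ((((k : ℝ) - 1) * β / 2 : ℝ) * Complex.I) := by
      congr 1
      push_cast
      ring
    have f2 : Complex.exp (((2 * ((k : ℝ) * β / 2) : ℝ) : ℂ) * Complex.I)
        * Complex.exp ((β * (j : ℝ) : ℝ) * Complex.I)
        = Complex.exp ((β * ((j + k : ℤ) : ℝ) : ℝ) * Complex.I) := by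
      rw [← Complex.exp_add]
      congr 1
      push_cast
      ring
    rw [Complex.real_smul]
    linear_combination Complex.exp ((β * (j : ℝ) : ℝ) * Complex.I) * ht
      - (((Real.cos ((k : ℝ) * β / 2) / Real.cos (β / 2) : ℝ)) : ℂ)
        * Complex.exp ((β * (j : ℝ) : ℝ) * Complex.I) * f1 + (t : ℂ) * f2
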